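/- Let k ≥ 2, f_0(y,z) = Σ_{j=0}^{⌊(k+1)/2⌋} (−1)^j ((k+1)!/((k+1−2j)!(j!)²)) y^{k+1−2j} z^j, and f_1 = D·f_0 where D = ((k+2)y² − 2kz)∂/∂y + (3k+4)yz ∂/∂z. Then the Jacobian determinant (∂f_0/∂y)(∂f_1/∂z) − (∂f_0/∂z)(∂f_1/∂y) is a nonzero polynomial; consequently f_0 and f_1 are algebraically independent over ℂ. -/

import Mathlib

open MvPolynomial

/-- The operator `D = ((k+2)y² − 2kz) ∂/∂y + (3k+4) yz ∂/∂z` on `ℂ[y,z]`. -/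
noncomputable def D2 (k : ℂ) : MvPolynomial (Fin 2) ℂ → MvPolynomial (Fin 2) ℂ :=
  fun p => (C (k + 2) * X 0 ^ 2 - C (2 * k) * X 1) * pderiv 0 p
    + C (3 * k + 4) * X 0 * X 1 * pderiv 1 p

/-- `f₀(y,z) = Σⱼ (−1)ʲ (k+1)!/((k+1−2j)!(j!)²) y^{k+1−2j} zʲ`. -/
noncomputable def f0 (k : ℕ) : MvPolynomial (Fin 2) ℂ :=
  ∑ j ∈ Finset.range ((k + 1) / 2 + 1),
    C ((-1) ^ j * (Nat.factorial (k + 1) : ℂ) /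
      (Nat.factorial (k + 1 - 2 * j) * (Nat.factorial j) ^ 2)) *
    X 0 ^ (k + 1 - 2 * j) * X 1 ^ j


lemma chain (v : Fin 2 → MvPolynomial (Fin 2) ℂ) (i : Fin 2) (F : MvPolynomial (Fin 2) ℂ) :
    pderiv i (aeval v F) =
      aeval v (pderiv 0 F) * pderiv i (v 0) + aeval v (pderiv 1 F) * pderiv i (v 1) := by
  induction F using MvPolynomial.induction_on with
  | C a => simp
  | add f g hf hg => simp only [map_add, hf, hg]; ring
  | mul_X f n hf =>
      fin_cases n <;>
        simp only [Fin.mk_zero, Fin.mk_one, Fin.isValue, map_mul, aeval_X, pderiv_mul,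
          pderiv_X_self, pderiv_X_of_ne (by decide : (0:Fin 2) ≠ 1),
          pderiv_X_of_ne (by decide : (1:Fin 2) ≠ 0),
          mul_one, mul_zero, add_zero, zero_add, map_add, map_zero, hf] <;> ring

lemma coeff_pderiv' (i : Fin 2) (m : Fin 2 →₀ ℕ) (f : MvPolynomial (Fin 2) ℂ) :
    coeff m (pderiv i f) = ((m i : ℂ) + 1) * coeff (m + Finsupp.single i 1) f := by
  induction f using MvPolynomial.induction_on' with
  | add f g hf hg => simp [hf, hg]; ring
  | monomial s a =>
      rw [pderiv_monomial]
      simp only [coeff_monomial]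
      by_cases hs : s = m + Finsupp.single i 1
      · subst hs
        rw [if_pos (by simp), if_pos rfl]
        simp [mul_comm]
      · rw [if_neg hs, mul_zero]
        by_cases hc : s - Finsupp.single i 1 = m
        · rw [if_pos hc]
          rcases Nat.eq_zero_or_pos (s i) with h0 | h0
          · simp [h0]
          · exfalso
            apply hs
            rw [← hc, tsub_add_cancel_of_le]
            rwa [Finsupp.single_le_iff]
        · rw [if_neg hc]

lemma td_zero_of_pderiv (f : MvPolynomial (Fin 2) ℂ) (h : ∀ i : Fin 2, pderiv i f = 0) :
    f.totalDegree = 0 := by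
  rw [totalDegree_eq_zero_iff]
  intro m hm x
  by_contra hx
  have h1 : (1 : ℕ) ≤ m x := Nat.one_le_iff_ne_zero.2 hx
  set m' : Fin 2 →₀ ℕ := m - Finsupp.single x 1 with hm'
  have := coeff_pderiv' x m' f
  rw [h x, coeff_zero, hm', tsub_add_cancel_of_le (Finsupp.single_le_iff.2 h1)] at this
  have hne : ((m' x : ℕ) : ℂ) + 1 ≠ 0 := Nat.cast_add_one_ne_zero _
  exact (mem_support_iff.1 hm) ((mul_eq_zero.1 this.symm).resolve_left hne)

lemma td_pderiv_le (i : Fin 2) (f : MvPolynomial (Fin 2) ℂ) (n : ℕ)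
    (h : f.totalDegree ≤ n + 1) : (pderiv i f).totalDegree ≤ n := by
  rw [totalDegree]
  apply Finset.sup_le
  intro d hd
  have hc : coeff d (pderiv i f) ≠ 0 := mem_support_iff.1 hd
  rw [coeff_pderiv' i d f] at hc
  have hc2 : coeff (d + Finsupp.single i 1) f ≠ 0 := fun h0 => hc (by rw [h0, mul_zero])
  have hmem := le_totalDegree (mem_support_iff.2 hc2)
  have hsum : (d + Finsupp.single i 1).sum (fun _ e => e) = d.sum (fun _ e => e) + 1 := by
    rw [Finsupp.sum_add_index' (fun _ => rfl) (fun _ _ _ => rfl), Finsupp.sum_single_index rfl]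
  omega

lemma aeval_eq_zero_base (v : Fin 2 → MvPolynomial (Fin 2) ℂ) (F : MvPolynomial (Fin 2) ℂ)
    (h0 : F.totalDegree = 0) (hev : aeval v F = 0) : F = 0 := by
  have hC : F = C (coeff 0 F) := by
    ext m
    by_cases hm : m = 0
    · simp [hm]
    · rw [coeff_C, if_neg (Ne.symm hm)]
      by_contra hc
      have hmem : m ∈ F.support := mem_support_iff.2 hc
      have := (totalDegree_eq_zero_iff _ F).1 h0 m hmem
      exact hm (Finsupp.ext fun x => this x)
  rw [hC] at hev ⊢
  rw [aeval_C] at hev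
  have : coeff 0 F = 0 := by
    have := congrArg (constantCoeff) hev
    simpa using this
  rw [this, map_zero]

lemma jacobian_indep (p q : MvPolynomial (Fin 2) ℂ)
    (hJ : pderiv 0 p * pderiv 1 q - pderiv 1 p * pderiv 0 q ≠ 0) :
    AlgebraicIndependent ℂ ![p, q] := by
  rw [algebraicIndependent_iff]
  have key : ∀ n (F : MvPolynomial (Fin 2) ℂ), F.totalDegree ≤ n →
      aeval ![p, q] F = 0 → F = 0 := by
    intro n
    induction n with
    | zero => exact fun F h0 hev => aeval_eq_zero_base _ F (Nat.le_zero.1 h0) hev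
    | succ n ih =>
      intro F hd hev
      have E0 := congrArg (pderiv 0) hev
      have E1 := congrArg (pderiv 1) hev
      rw [chain, map_zero] at E0 E1
      simp only [Matrix.cons_val_zero, Matrix.cons_val_one, Matrix.head_cons] at E0 E1
      set A := aeval ![p, q] (pderiv 0 F) with hA
      set B := aeval ![p, q] (pderiv 1 F) with hB
      have hA0 : A = 0 := by
        have h : A * (pderiv 0 p * pderiv 1 q - pderiv 1 p * pderiv 0 q) = 0 := by
          linear_combination pderiv 1 q * E0 - pderiv 0 q * E1
        exact (mul_eq_zero.1 h).resolve_right hJ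
      have hB0 : B = 0 := by
        have h : B * (pderiv 0 p * pderiv 1 q - pderiv 1 p * pderiv 0 q) = 0 := by
          linear_combination pderiv 0 p * E1 - pderiv 1 p * E0
        exact (mul_eq_zero.1 h).resolve_right hJ
      have h0 : pderiv 0 F = 0 := ih _ (td_pderiv_le 0 F n hd) (by rw [← hA, hA0])
      have h1 : pderiv 1 F = 0 := ih _ (td_pderiv_le 1 F n hd) (by rw [← hB, hB0])
      have htd : F.totalDegree = 0 := td_zero_of_pderiv F (by
        intro i; fin_cases i
        · exact h0
        · exact h1)
      exact aeval_eq_zero_base _ F htd hev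
  exact fun F hF => key F.totalDegree F le_rfl hF

lemma t1 (c : ℂ) (e j : ℕ) :
    eval ![(0:ℂ),1] (pderiv 0 (C c * X 0 ^ e * X 1 ^ j)) = c * e * 0^(e-1) := by
  simp [pderiv_mul, pderiv_pow, pderiv_X_self, pderiv_X_of_ne (show (1:Fin 2) ≠ 0 by decide)]
  ring

lemma t2 (c : ℂ) (e j : ℕ) :
    eval ![(0:ℂ),1] (pderiv 1 (C c * X 0 ^ e * X 1 ^ j)) = c * j * 0^e := by
  simp [pderiv_mul, pderiv_pow, pderiv_X_self, pderiv_X_of_ne (show (0:Fin 2) ≠ 1 by decide)]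
  ring

lemma t3 (c : ℂ) (e j : ℕ) :
    eval ![(0:ℂ),1] (pderiv 0 (pderiv 0 (C c * X 0 ^ e * X 1 ^ j)))
      = c * e * ((e-1 : ℕ) : ℂ) * 0^(e-2) := by
  simp [pderiv_mul, pderiv_pow, pderiv_X_self, pderiv_X_of_ne (show (1:Fin 2) ≠ 0 by decide),
    Nat.sub_sub]
  ring

lemma t4 (c : ℂ) (e j : ℕ) :
    eval ![(0:ℂ),1] (pderiv 1 (pderiv 0 (C c * X 0 ^ e * X 1 ^ j))) = c * e * j * 0^(e-1) := by
  simp [pderiv_mul, pderiv_pow, pderiv_X_self, pderiv_X_of_ne (show (1:Fin 2) ≠ 0 by decide),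
    pderiv_X_of_ne (show (0:Fin 2) ≠ 1 by decide)]
  ring

lemma evJ_ne (k : ℕ) (hk : 2 ≤ k) :
    eval ![(0:ℂ),1] (pderiv 0 (f0 k) * pderiv 1 (D2 (k : ℂ) (f0 k))
      - pderiv 1 (f0 k) * pderiv 0 (D2 (k : ℂ) (f0 k))) ≠ 0 := by
  set c : ℕ → ℂ := fun j => (-1) ^ j * (Nat.factorial (k + 1) : ℂ) /
      (Nat.factorial (k + 1 - 2 * j) * (Nat.factorial j) ^ 2) with hc
  set a := eval ![(0:ℂ),1] (pderiv 0 (f0 k)) with hadef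
  set b := eval ![(0:ℂ),1] (pderiv 1 (f0 k)) with hbdef
  set p2 := eval ![(0:ℂ),1] (pderiv 0 (pderiv 0 (f0 k))) with hpdef
  set q2 := eval ![(0:ℂ),1] (pderiv 1 (pderiv 0 (f0 k))) with hqdef
  have hA : a = ∑ j ∈ Finset.range ((k + 1) / 2 + 1),
      c j * (k + 1 - 2 * j : ℕ) * 0 ^ (k + 1 - 2 * j - 1) := by
    rw [hadef, f0, map_sum, map_sum]
    exact Finset.sum_congr rfl fun j _ => t1 _ _ _
  have hB : b = ∑ j ∈ Finset.range ((k + 1) / 2 + 1),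
      c j * (j : ℕ) * 0 ^ (k + 1 - 2 * j) := by
    rw [hbdef, f0, map_sum, map_sum]
    exact Finset.sum_congr rfl fun j _ => t2 _ _ _
  have hP : p2 = ∑ j ∈ Finset.range ((k + 1) / 2 + 1),
      c j * (k + 1 - 2 * j : ℕ) * ((k + 1 - 2 * j - 1 : ℕ) : ℂ) * 0 ^ (k + 1 - 2 * j - 2) := by
    rw [hpdef, f0, map_sum, map_sum, map_sum]
    exact Finset.sum_congr rfl fun j _ => t3 _ _ _
  have hQ : q2 = ∑ j ∈ Finset.range ((k + 1) / 2 + 1),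
      c j * (k + 1 - 2 * j : ℕ) * (j : ℕ) * 0 ^ (k + 1 - 2 * j - 1) := by
    rw [hqdef, f0, map_sum, map_sum, map_sum]
    exact Finset.sum_congr rfl fun j _ => t4 _ _ _
  have h1 : eval ![(0:ℂ),1] (pderiv 1 (D2 (k : ℂ) (f0 k))) = -(2*k)*a - 2*k*q2 := by
    rw [D2]
    simp [pderiv_mul, pderiv_pow, pderiv_X_self,
      pderiv_X_of_ne (show (1:Fin 2) ≠ 0 by decide),
      pderiv_X_of_ne (show (0:Fin 2) ≠ 1 by decide), ← hadef, ← hqdef]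
    ring
  have h0 : eval ![(0:ℂ),1] (pderiv 0 (D2 (k : ℂ) (f0 k))) = -(2*k)*p2 + (3*k+4)*b := by
    rw [D2]
    simp [pderiv_mul, pderiv_pow, pderiv_X_self,
      pderiv_X_of_ne (show (1:Fin 2) ≠ 0 by decide),
      pderiv_X_of_ne (show (0:Fin 2) ≠ 1 by decide), ← hbdef, ← hpdef]
    ring
  rw [map_sub, map_mul, map_mul, ← hadef, ← hbdef, h1, h0]
  have hcne : ∀ j : ℕ, c j ≠ 0 := by
    intro j
    rw [hc]
    apply div_ne_zero
    · exact mul_ne_zero (pow_ne_zero _ (neg_ne_zero.2 one_ne_zero))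
        (Nat.cast_ne_zero.2 (Nat.factorial_ne_zero _))
    · exact mul_ne_zero (Nat.cast_ne_zero.2 (Nat.factorial_ne_zero _))
        (pow_ne_zero _ (Nat.cast_ne_zero.2 (Nat.factorial_ne_zero _)))
  rcases Nat.even_or_odd k with ⟨m, hm⟩ | ⟨m, hm⟩
  · -- even case : k = m + m
    have hN : (k + 1) / 2 = m := by omega
    have ha : a = c m := by
      rw [hA, hN, Finset.sum_eq_single m]
      · rw [show k + 1 - 2*m = 1 from by omega]
        simp
      · intro j hj hne
        rw [zero_pow (show k + 1 - 2*j - 1 ≠ 0 from by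
          simp only [Finset.mem_range] at hj; omega), mul_zero]
      · intro h; exact absurd (Finset.mem_range.2 (by omega)) h
    have hb : b = 0 := by
      rw [hB, hN]
      apply Finset.sum_eq_zero
      intro j hj
      rw [zero_pow (show k + 1 - 2*j ≠ 0 from by
        simp only [Finset.mem_range] at hj; omega), mul_zero]
    have hq : q2 = c m * m := by
      rw [hQ, hN, Finset.sum_eq_single m]
      · rw [show k + 1 - 2*m = 1 from by omega]
        simp
      · intro j hj hne
        rw [zero_pow (show k + 1 - 2*j - 1 ≠ 0 from by
          simp only [Finset.mem_range] at hj; omega), mul_zero]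
      · intro h; exact absurd (Finset.mem_range.2 (by omega)) h
    have hval : a * (-(2*(k:ℂ))*a - 2*(k:ℂ)*q2) - b * (-(2*(k:ℂ))*p2 + (3*(k:ℂ)+4)*b)
        = -(2*(k:ℂ)*((m:ℂ)+1)) * (c m)^2 := by
      rw [ha, hb, hq]; ring
    rw [hval]
    apply mul_ne_zero
    · apply neg_ne_zero.2
      exact mul_ne_zero (mul_ne_zero two_ne_zero (Nat.cast_ne_zero.2 (by omega)))
        (Nat.cast_add_one_ne_zero m)
    · exact pow_ne_zero _ (hcne m)
  · -- odd case : k = 2*m+1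
    have hm1 : 1 ≤ m := by omega
    have hN : (k + 1) / 2 = m + 1 := by omega
    have ha : a = 0 := by
      rw [hA, hN]
      apply Finset.sum_eq_zero
      intro j hj
      by_cases hj2 : j = m + 1
      · rw [hj2, show k + 1 - 2*(m+1) = 0 from by omega]
        simp
      · rw [zero_pow (show k + 1 - 2*j - 1 ≠ 0 from by
          simp only [Finset.mem_range] at hj; omega), mul_zero]
    have hq : q2 = 0 := by
      rw [hQ, hN]
      apply Finset.sum_eq_zero
      intro j hj
      by_cases hj2 : j = m + 1
      · rw [hj2, show k + 1 - 2*(m+1) = 0 from by omega]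
        simp
      · rw [zero_pow (show k + 1 - 2*j - 1 ≠ 0 from by
          simp only [Finset.mem_range] at hj; omega), mul_zero]
    have hb : b = c (m+1) * ((m:ℂ)+1) := by
      rw [hB, hN, Finset.sum_eq_single (m+1)]
      · rw [show k + 1 - 2*(m+1) = 0 from by omega]
        push_cast
        simp
      · intro j hj hne
        rw [zero_pow (show k + 1 - 2*j ≠ 0 from by
          simp only [Finset.mem_range] at hj; omega), mul_zero]
      · intro h; exact absurd (Finset.mem_range.2 (by omega)) h
    have hp : p2 = 2 * c m := by
      rw [hP, hN, Finset.sum_eq_single m]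
      · rw [show k + 1 - 2*m = 2 from by omega]
        norm_num
        ring
      · intro j hj hne
        by_cases hj2 : j = m + 1
        · rw [hj2, show k + 1 - 2*(m+1) = 0 from by omega]
          simp
        · rw [zero_pow (show k + 1 - 2*j - 2 ≠ 0 from by
            simp only [Finset.mem_range] at hj; omega), mul_zero]
      · intro h; exact absurd (Finset.mem_range.2 (by omega)) h
    have hrel : 2 * c m = -((m:ℂ)+1)^2 * c (m+1) := by
      rw [hc]
      simp only [show k + 1 - 2*m = 2 from by omega, show k + 1 - 2*(m+1) = 0 from by omega,
        Nat.factorial_zero, Nat.factorial_succ, Nat.factorial_two, pow_succ]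
      push_cast
      have h1 : ((Nat.factorial m : ℂ)) ≠ 0 := Nat.cast_ne_zero.2 (Nat.factorial_ne_zero _)
      have h2 : ((m:ℂ)+1) ≠ 0 := Nat.cast_add_one_ne_zero m
      field_simp
    have hval : a * (-(2*(k:ℂ))*a - 2*(k:ℂ)*q2) - b * (-(2*(k:ℂ))*p2 + (3*(k:ℂ)+4)*b)
        = -(((m:ℂ)+1)^2 * (c (m+1))^2 * (2*(k:ℂ)*((m:ℂ)+1) + 3*(k:ℂ)+4)) := by
      rw [ha, hq, hb, hp]
      linear_combination (2*(k:ℂ)*((m:ℂ)+1)*(c (m+1))) * hrel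
    rw [hval]
    apply neg_ne_zero.2
    apply mul_ne_zero
    apply mul_ne_zero
    · exact pow_ne_zero _ (Nat.cast_add_one_ne_zero m)
    · exact pow_ne_zero _ (hcne (m+1))
    · rw [show (2*(k:ℂ)*((m:ℂ)+1) + 3*(k:ℂ)+4) = ((2*k*(m+1)+3*k+4 : ℕ) : ℂ) from by
        push_cast; ring]
      exact Nat.cast_ne_zero.2 (by omega)

theorem stmt_10 (k : ℕ) (hk : 2 ≤ k) :
    pderiv 0 (f0 k) * pderiv 1 (D2 (k : ℂ) (f0 k))
      - pderiv 1 (f0 k) * pderiv 0 (D2 (k : ℂ) (f0 k)) ≠ 0 ∧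
    AlgebraicIndependent ℂ ![f0 k, D2 (k : ℂ) (f0 k)] := by
  have hJ : pderiv 0 (f0 k) * pderiv 1 (D2 (k : ℂ) (f0 k))
      - pderiv 1 (f0 k) * pderiv 0 (D2 (k : ℂ) (f0 k)) ≠ 0 := by
    intro h
    exact evJ_ne k hk (by rw [h, map_zero])
  exact ⟨hJ, jacobian_indep _ _ hJ⟩
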